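/- Let f be a derivation of N and let k be an integer with 1 < k < t−1. Then for every A ∈ N^{k,k+1} and all row/column indices r, s, the entry f(A) r s is zero unless b r = k, or b s = k+1, or (b r, b s) = (1, t). (That is, f(N^{k,k+1}) is contained in the sum of the blocks (p, k+1) with p ≤ k, the blocks (k, q) with q ≥ k+1, and the center block (1, t).) -/

import Mathlib

/-- `A` is a strictly block upper triangular matrix relative to the block function `b`
(index `r` lies in block `b r`): `A r s = 0` whenever `b r ≥ b s`. -/
def InN {F : Type*} [Field F] {n : ℕ} (b : Fin n → ℕ)
    (A : Matrix (Fin n) (Fin n) F) : Prop :=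
  ∀ r s, b s ≤ b r → A r s = 0

/-- `A` lies in the `(i,j)` block `N^{ij}`: `A r s = 0` unless `b r = i` and `b s = j`. -/
def InBlk {F : Type*} [Field F] {n : ℕ} (b : Fin n → ℕ) (i j : ℕ)
    (A : Matrix (Fin n) (Fin n) F) : Prop :=
  ∀ r s, ¬(b r = i ∧ b s = j) → A r s = 0

/-- `f` is a derivation of the Lie algebra `N` of strictly block upper triangular matrices:
it maps `N` into `N` and satisfies `f [X,Y] = [f X, Y] + [X, f Y]` on `N`,
where `[X,Y] = XY - YX`. -/
def IsDerN {F : Type*} [Field F] {n : ℕ} (b : Fin n → ℕ)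
    (f : Matrix (Fin n) (Fin n) F →ₗ[F] Matrix (Fin n) (Fin n) F) : Prop :=
  (∀ A, InN b A → InN b (f A)) ∧
  ∀ X Y, InN b X → InN b Y →
    f (X * Y - Y * X) = (f X * Y - Y * f X) + (X * f Y - f Y * X)

/-- for a derivation `f` of `N` and `1 < k < t-1`, the image `f(N^{k,k+1})`
lies in the `k`-th block row, the `(k+1)`-th block column, and the center block `(1,t)`. -/
theorem stmt4 {F : Type*} [Field F] {n t : ℕ} (b : Fin n → ℕ)
    (hn : 1 ≤ n) (ht : 3 ≤ t) (hmono : Monotone b)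
    (hlb : ∀ r, 1 ≤ b r) (hub : ∀ r, b r ≤ t)
    (hsurj : ∀ k, 1 ≤ k → k ≤ t → ∃ r, b r = k)
    (f : Matrix (Fin n) (Fin n) F →ₗ[F] Matrix (Fin n) (Fin n) F)
    (hf : IsDerN b f)
    (k : ℕ) (hk1 : 1 < k) (hk2 : k < t - 1) :
    ∀ A, InBlk b k (k + 1) A → ∀ r s,
      ¬(b r = k) → ¬(b s = k + 1) → ¬(b r = 1 ∧ b s = t) →
      f A r s = 0 := by
  obtain ⟨hfN, hder⟩ := hf
  intro A hA r s hrk hsk1 hcent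
  have hAN : InN b A := by
    intro u v huv
    apply hA
    rintro ⟨h1, h2⟩; omega
  by_cases hpq : b s ≤ b r
  · exact hfN A hAN r s hpq
  push_neg at hpq
  have hrs : r ≠ s := fun h => by rw [h] at hpq; exact lt_irrefl _ hpq
  by_cases hp1 : b r = 1
  · -- b s < t, kill via right multiplication by E_{s,s'} with b s' = t
    have hqt : b s < t := lt_of_le_of_ne (hub s) fun h => hcent ⟨hp1, h⟩
    obtain ⟨s', hs'⟩ := hsurj t (by omega) le_rfl
    have hXN : InN b (Matrix.single s s' (1 : F)) := by
      intro u v huv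
      apply Matrix.single_apply_of_ne
      rintro ⟨h1, h2⟩
      rw [← h1, ← h2] at huv
      omega
    have hXA : Matrix.single s s' (1 : F) * A - A * Matrix.single s s' (1 : F) = 0 := by
      ext u v
      simp only [Matrix.sub_apply, Matrix.zero_apply]
      have h1 : (Matrix.single s s' (1 : F) * A) u v = 0 := by
        by_cases hu : u = s
        · subst hu
          rw [Matrix.single_mul_apply_same]
          rw [hA s' v (by rintro ⟨h, _⟩; omega), mul_zero]
        · rw [Matrix.single_mul_apply_of_ne _ _ _ _ _ hu]
      have h2 : (A * Matrix.single s s' (1 : F)) u v = 0 := by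
        by_cases hv : v = s'
        · subst hv
          rw [Matrix.mul_single_apply_same]
          rw [hA u s (by rintro ⟨_, h⟩; omega), zero_mul]
        · rw [Matrix.mul_single_apply_of_ne _ _ _ _ _ hv]
      rw [h1, h2, sub_zero]
    have heq := hder (Matrix.single s s' (1 : F)) A hXN hAN
    rw [hXA, map_zero] at heq
    have hent := congrFun (congrFun heq.symm r) s'
    simp only [Matrix.add_apply, Matrix.sub_apply, Matrix.zero_apply] at hent
    have e1 : (f (Matrix.single s s' (1 : F)) * A) r s' = 0 := by
      rw [Matrix.mul_apply]
      apply Finset.sum_eq_zero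
      intro w _
      rw [hA w s' (by rintro ⟨_, h⟩; omega), mul_zero]
    have e2 : (A * f (Matrix.single s s' (1 : F))) r s' = 0 := by
      rw [Matrix.mul_apply]
      apply Finset.sum_eq_zero
      intro w _
      rw [hA r w (by rintro ⟨h, _⟩; exact hrk h), zero_mul]
    have e3 : (Matrix.single s s' (1 : F) * f A) r s' = 0 :=
      Matrix.single_mul_apply_of_ne _ _ _ _ _ hrs _
    have e4 : (f A * Matrix.single s s' (1 : F)) r s' = f A r s := by
      rw [Matrix.mul_single_apply_same, mul_one]
    rw [e1, e2, e3, e4] at hent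
    simpa using hent
  · -- b r > 1, kill via left multiplication by E_{r',r} with b r' = 1
    obtain ⟨r', hr'⟩ := hsurj 1 le_rfl (by omega)
    have hp1' : 1 < b r := lt_of_le_of_ne (hlb r) (Ne.symm hp1)
    have hXN : InN b (Matrix.single r' r (1 : F)) := by
      intro u v huv
      apply Matrix.single_apply_of_ne
      rintro ⟨h1, h2⟩
      rw [← h1, ← h2] at huv
      omega
    have hXA : Matrix.single r' r (1 : F) * A - A * Matrix.single r' r (1 : F) = 0 := by
      ext u v
      simp only [Matrix.sub_apply, Matrix.zero_apply]
      have h1 : (Matrix.single r' r (1 : F) * A) u v = 0 := by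
        by_cases hu : u = r'
        · subst hu
          rw [Matrix.single_mul_apply_same]
          rw [hA r v (by rintro ⟨h, _⟩; exact hrk h), mul_zero]
        · rw [Matrix.single_mul_apply_of_ne _ _ _ _ _ hu]
      have h2 : (A * Matrix.single r' r (1 : F)) u v = 0 := by
        by_cases hv : v = r
        · subst hv
          rw [Matrix.mul_single_apply_same]
          rw [hA u r' (by rintro ⟨_, h⟩; omega), zero_mul]
        · rw [Matrix.mul_single_apply_of_ne _ _ _ _ _ hv]
      rw [h1, h2, sub_zero]
    have heq := hder (Matrix.single r' r (1 : F)) A hXN hAN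
    rw [hXA, map_zero] at heq
    have hent := congrFun (congrFun heq.symm r') s
    simp only [Matrix.add_apply, Matrix.sub_apply, Matrix.zero_apply] at hent
    have e1 : (f (Matrix.single r' r (1 : F)) * A) r' s = 0 := by
      rw [Matrix.mul_apply]
      apply Finset.sum_eq_zero
      intro w _
      rw [hA w s (by rintro ⟨_, h⟩; exact hsk1 h), mul_zero]
    have e2 : (A * f (Matrix.single r' r (1 : F))) r' s = 0 := by
      rw [Matrix.mul_apply]
      apply Finset.sum_eq_zero
      intro w _
      rw [hA r' w (by rintro ⟨h, _⟩; omega), zero_mul]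
    have e3 : (Matrix.single r' r (1 : F) * f A) r' s = f A r s := by
      rw [Matrix.single_mul_apply_same, one_mul]
    have e4 : (f A * Matrix.single r' r (1 : F)) r' s = 0 :=
      Matrix.mul_single_apply_of_ne _ _ _ _ _ (Ne.symm hrs) _
    rw [e1, e2, e3, e4] at hent
    simpa using hent
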